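/- Let f: ℕ → {−1,1}, let I be a finite set of positive integers, and let 0 < u₀ < u₁. Then ∫_{u₀}^{u₁} #{n ∈ I : f(n) = −f(⌊tn⌋)} dt ≤ ∑_{n ∈ I} (1/n)·#{m : u₀n ≤ m ≤ u₁n, f(m) = −f(n)} + ∑_{n∈I} 2/n. -/

import Mathlib

open MeasureTheory Finset Set ENNReal

theorem stmt_15 (f : ℕ → ℤ) (hpm : ∀ n : ℕ, 1 ≤ n → f n = 1 ∨ f n = -1)
    (I : Finset ℕ) (hI : ∀ n ∈ I, 1 ≤ n) (u₀ u₁ : ℝ) (hu₀ : 0 < u₀) (hu : u₀ < u₁) :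
    (∫ t in u₀..u₁, ((I.filter (fun n => f n = -f ⌊t * n⌋₊)).card : ℝ)) ≤
      (∑ n ∈ I, (1 / (n : ℝ)) *
        ((Finset.Icc ⌈u₀ * n⌉₊ ⌊u₁ * n⌋₊).filter (fun m => f m = -f n)).card) +
      ∑ n ∈ I, 2 / (n : ℝ) := by
  classical
  have hmeasS : ∀ n : ℕ, MeasurableSet {t : ℝ | f n = -f ⌊t * n⌋₊} := by
    intro n
    have h : {t : ℝ | f n = -f ⌊t * n⌋₊}
        = (fun t : ℝ => ⌊t * (n:ℝ)⌋₊) ⁻¹' {m | f n = -f m} := rfl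
    rw [h]
    exact (Nat.measurable_floor.comp (measurable_id.mul_const _)) (by trivial)
  have key : ∀ n ∈ I,
      (∫ t in Set.Ioc u₀ u₁,
          Set.indicator {t : ℝ | f n = -f ⌊t * n⌋₊} (fun _ => (1:ℝ)) t)
        ≤ (1 / (n : ℝ)) *
            ((Finset.Icc ⌈u₀ * n⌉₊ ⌊u₁ * n⌋₊).filter (fun m => f m = -f n)).card
          + 2 / (n : ℝ) := by
    intro n hn
    have hn1 := hI n hn
    have hnR : (0:ℝ) < n := by exact_mod_cast hn1
    set S : Set ℝ := {t : ℝ | f n = -f ⌊t * n⌋₊} with hS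
    set T : Finset ℕ := (Finset.Icc ⌊u₀ * n⌋₊ ⌊u₁ * n⌋₊).filter (fun m => f m = -f n)
      with hT
    have hsub : Set.Ioc u₀ u₁ ∩ S ⊆ ⋃ m ∈ T, Set.Ico ((m:ℝ)/n) (((m:ℝ)+1)/n) := by
      rintro t ⟨ht, hts⟩
      have ht1 : u₀ < t := ht.1
      have ht2 : t ≤ u₁ := ht.2
      have ht0 : 0 ≤ t * n := le_of_lt (mul_pos (hu₀.trans ht1) hnR)
      have htsf : f ⌊t * n⌋₊ = -f n := by
        have h' : f n = -f ⌊t * (n:ℝ)⌋₊ := hts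
        linarith
      have hmT : ⌊t * (n:ℝ)⌋₊ ∈ T := by
        rw [hT, Finset.mem_filter, Finset.mem_Icc]
        refine ⟨⟨Nat.floor_le_floor ?_, Nat.floor_le_floor ?_⟩, htsf⟩
        · nlinarith
        · nlinarith
      have hIco : t ∈ Set.Ico ((⌊t * (n:ℝ)⌋₊ : ℝ)/n) (((⌊t * (n:ℝ)⌋₊ : ℝ)+1)/n) := by
        constructor
        · rw [div_le_iff₀ hnR]
          exact Nat.floor_le ht0
        · rw [lt_div_iff₀ hnR]
          exact Nat.lt_floor_add_one _
      exact Set.mem_biUnion hmT hIco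
    have hvol : volume (Set.Ioc u₀ u₁ ∩ S) ≤ (T.card : ℝ≥0∞) * ENNReal.ofReal (1/n) := by
      calc volume (Set.Ioc u₀ u₁ ∩ S)
          ≤ volume (⋃ m ∈ T, Set.Ico ((m:ℝ)/n) (((m:ℝ)+1)/n)) := measure_mono hsub
        _ ≤ ∑ m ∈ T, volume (Set.Ico ((m:ℝ)/n) (((m:ℝ)+1)/n)) :=
            measure_biUnion_finset_le _ _
        _ = ∑ _m ∈ T, ENNReal.ofReal (1/n) := by
            refine Finset.sum_congr rfl fun m _ => ?_
            rw [Real.volume_Ico]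
            congr 1
            field_simp
            ring
        _ = (T.card : ℝ≥0∞) * ENNReal.ofReal (1/n) := by
            rw [Finset.sum_const, nsmul_eq_mul]
    have hint : (∫ t in Set.Ioc u₀ u₁, S.indicator (fun _ => (1:ℝ)) t)
        = (volume (Set.Ioc u₀ u₁ ∩ S)).toReal := by
      rw [MeasureTheory.setIntegral_indicator (hmeasS n),
        MeasureTheory.setIntegral_const, smul_eq_mul, mul_one]
      rfl
    have hcard : T.card ≤
        ((Finset.Icc ⌈u₀ * n⌉₊ ⌊u₁ * n⌋₊).filter (fun m => f m = -f n)).card + 1 := by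
      have hsub2 : T ⊆ insert ⌊u₀ * (n:ℝ)⌋₊
          ((Finset.Icc ⌈u₀ * n⌉₊ ⌊u₁ * n⌋₊).filter (fun m => f m = -f n)) := by
        intro m hm
        rw [hT, Finset.mem_filter, Finset.mem_Icc] at hm
        rcases eq_or_lt_of_le hm.1.1 with h | h
        · exact h ▸ Finset.mem_insert_self _ _
        · refine Finset.mem_insert_of_mem ?_
          rw [Finset.mem_filter, Finset.mem_Icc]
          exact ⟨⟨le_trans (Nat.ceil_le_floor_add_one _) h, hm.1.2⟩, hm.2⟩
      calc T.card ≤ _ := Finset.card_le_card hsub2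
        _ ≤ _ + 1 := Finset.card_insert_le _ _
    rw [hint]
    have h1 : (volume (Set.Ioc u₀ u₁ ∩ S)).toReal ≤ (T.card : ℝ) * (1/(n:ℝ)) := by
      have hne : (T.card : ℝ≥0∞) * ENNReal.ofReal (1/n) ≠ ⊤ :=
        ENNReal.mul_ne_top (ENNReal.natCast_ne_top _) ENNReal.ofReal_ne_top
      have := ENNReal.toReal_mono hne hvol
      rwa [ENNReal.toReal_mul, ENNReal.toReal_natCast,
        ENNReal.toReal_ofReal (by positivity)] at this
    have hcR : (T.card : ℝ) ≤
        (((Finset.Icc ⌈u₀ * n⌉₊ ⌊u₁ * n⌋₊).filter (fun m => f m = -f n)).card : ℝ) + 1 := by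
      exact_mod_cast hcard
    have hinv : (0:ℝ) < 1/(n:ℝ) := by positivity
    have h2 : 2/(n:ℝ) = 2*(1/(n:ℝ)) := by ring
    nlinarith [mul_le_mul_of_nonneg_right hcR hinv.le]
  have heq : ∀ t : ℝ, ((I.filter (fun n => f n = -f ⌊t * n⌋₊)).card : ℝ)
      = ∑ n ∈ I, Set.indicator {t : ℝ | f n = -f ⌊t * n⌋₊} (fun _ => (1:ℝ)) t := by
    intro t
    rw [Finset.card_filter]
    push_cast
    refine Finset.sum_congr rfl fun n _ => ?_
    simp [Set.indicator_apply]
  rw [intervalIntegral.integral_of_le hu.le]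
  calc (∫ t in Set.Ioc u₀ u₁, ((I.filter (fun n => f n = -f ⌊t * n⌋₊)).card : ℝ))
      = ∫ t in Set.Ioc u₀ u₁,
          ∑ n ∈ I, Set.indicator {t : ℝ | f n = -f ⌊t * n⌋₊} (fun _ => (1:ℝ)) t := by
        exact integral_congr_ae (Filter.Eventually.of_forall fun t => heq t)
    _ = ∑ n ∈ I, ∫ t in Set.Ioc u₀ u₁,
          Set.indicator {t : ℝ | f n = -f ⌊t * n⌋₊} (fun _ => (1:ℝ)) t := by
        refine MeasureTheory.integral_finset_sum _ fun n _ => ?_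
        exact (MeasureTheory.integrable_const (1:ℝ)).indicator (hmeasS n)
    _ ≤ ∑ n ∈ I, ((1 / (n : ℝ)) *
          ((Finset.Icc ⌈u₀ * n⌉₊ ⌊u₁ * n⌋₊).filter (fun m => f m = -f n)).card
          + 2 / (n : ℝ)) := Finset.sum_le_sum key
    _ = _ := Finset.sum_add_distrib
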